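/- Let q be a prime power, 1 ≤ m ≤ ℓ, and let α* ∈ F_{q^ℓ}. Then there exist polynomials g_1, …, g_ℓ ∈ F_{q^ℓ}[X], each of degree at most q^m − 1, such that g_1(α*), …, g_ℓ(α*) form an F_q-basis of F_{q^ℓ}, and for every α ∈ F_{q^ℓ} with α ≠ α*, dim_{F_q} span_{F_q}{g_1(α), …, g_ℓ(α)} ≤ ℓ − m. -/

import Mathlib

open scoped Classical

open Polynomial

/-- Construction I (single erasure): for `1 ≤ m ≤ ℓ` and any `α* ∈ F_{q^ℓ}` there exist
polynomials `g₁, …, g_ℓ` of degree at most `q^m − 1` whose evaluations at `α*` form an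
`F_q`-basis of `F_{q^ℓ}`, while for every `α ≠ α*` the evaluations `g_i(α)` span an
`F_q`-subspace of dimension at most `ℓ − m`. -/
theorem statement5 {K F : Type*} [Field K] [Field F] [Fintype K] [Fintype F] [Algebra K F]
    (q ℓ m : ℕ) (hq : Fintype.card K = q) (hℓ : Module.finrank K F = ℓ)
    (hm1 : 1 ≤ m) (hmℓ : m ≤ ℓ) (αs : F) :
    ∃ g : Fin ℓ → Polynomial F,
      (∀ i, (g i).natDegree ≤ q ^ m - 1) ∧
      LinearIndependent K (fun i => (g i).eval αs) ∧
      Submodule.span K (Set.range fun i => (g i).eval αs) = ⊤ ∧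
      ∀ α : F, α ≠ αs →
        Module.finrank K (Submodule.span K (Set.range fun i => (g i).eval α)) ≤ ℓ - m := by
  classical
  have hFD : FiniteDimensional K F := Module.Finite.of_finite
  have hq1 : 1 ≤ q := hq ▸ Fintype.card_pos
  -- basis of F over K
  let b : Module.Basis (Fin ℓ) K F := Module.finBasisOfFinrankEq K F hℓ
  -- the subspace W of dimension m
  have hli : LinearIndependent K (fun i : Fin m => b (Fin.castLE hmℓ i)) :=
    b.linearIndependent.comp _ (Fin.castLE_injective hmℓ)
  set W : Submodule K F :=
    Submodule.span K (Set.range fun i : Fin m => b (Fin.castLE hmℓ i)) with hWdef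
  have hWrank : Module.finrank K W = m := by
    rw [hWdef, finrank_span_eq_card hli, Fintype.card_fin]
  set S : Finset F := Set.toFinset (W : Set F) with hSdef
  have hmemS : ∀ x : F, x ∈ S ↔ x ∈ W := by
    intro x; rw [hSdef, Set.mem_toFinset]; rfl
  have hScard : S.card = q ^ m := by
    rw [hSdef, Set.toFinset_card]
    have h1 : Fintype.card (W : Set F) = Fintype.card W :=
      Fintype.card_congr (Equiv.subtypeEquivRight fun x => Iff.rfl)
    rw [h1, Module.card_eq_pow_finrank (K := K), hq, hWrank]
  have h0W : (0 : F) ∈ W := W.zero_mem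
  have h0S : (0 : F) ∈ S := (hmemS 0).mpr h0W
  -- the subspace polynomial
  set P : F[X] := ∏ w ∈ S, (X - C w) with hPdef
  have hPmonic : P.Monic := monic_prod_of_monic _ _ fun w _ => monic_X_sub_C w
  have hPdeg : P.natDegree = q ^ m := by
    rw [hPdef, natDegree_prod_of_monic _ _ fun w _ => monic_X_sub_C w]
    simp [natDegree_X_sub_C, hScard]
  have hPeval : ∀ x : F, P.eval x = ∏ w ∈ S, (x - w) := by
    intro x; simp [hPdef, eval_prod]
  have hProot : ∀ x : F, P.eval x = 0 ↔ x ∈ W := by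
    intro x
    rw [hPeval, Finset.prod_eq_zero_iff]
    constructor
    · rintro ⟨w, hw, hxw⟩
      have : x = w := by rwa [sub_eq_zero] at hxw
      exact this ▸ (hmemS w).mp hw
    · intro hx; exact ⟨x, (hmemS x).mpr hx, sub_self x⟩
  -- shift invariance
  have hshift : ∀ a ∈ W, ∀ x : F, P.eval (x + a) = P.eval x := by
    intro a ha x
    rw [hPeval, hPeval]
    refine Finset.prod_nbij' (fun w => w - a) (fun w => w + a) ?_ ?_ ?_ ?_ ?_
    · intro w hw
      exact (hmemS _).mpr (W.sub_mem ((hmemS w).mp hw) ha)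
    · intro w hw
      exact (hmemS _).mpr (W.add_mem ((hmemS w).mp hw) ha)
    · intro w _; ring
    · intro w _; ring
    · intro w _; ring
  -- additivity of evaluation
  have hadd : ∀ x y : F, P.eval (x + y) = P.eval x + P.eval y := by
    intro x y
    set D : F[X] := P.comp (X + C y) - P - C (P.eval y) with hDdef
    by_cases hD0 : D = 0
    · have hcomp : P.comp (X + C y) = P + C (P.eval y) := by
        rw [hDdef, sub_sub, sub_eq_zero] at hD0
        exact hD0
      have := congrArg (Polynomial.eval x) hcomp
      simpa [eval_comp] using this
    · exfalso
      apply hD0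
      apply eq_zero_of_natDegree_lt_card_of_eval_eq_zero' D S
      · intro w hw
        have hwW : w ∈ W := (hmemS w).mp hw
        have h1 : P.eval (w + y) = P.eval y := by
          rw [add_comm]; exact hshift w hwW y
        have h2 : P.eval w = 0 := (hProot w).mpr hwW
        simp [hDdef, eval_comp, h1, h2]
      · -- degree bound
        have hPd : P.degree = ((q ^ m : ℕ) : WithBot ℕ) := by
          rw [degree_eq_natDegree hPmonic.ne_zero, hPdeg]
        have hcompdeg : (P.comp (X + C y)).degree = P.degree := by
          rw [degree_eq_natDegree (hPmonic.comp_X_add_C y).ne_zero,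
            degree_eq_natDegree hPmonic.ne_zero, natDegree_comp, natDegree_X_add_C, mul_one]
        have hA : (P.comp (X + C y) - P).degree < ((q ^ m : ℕ) : WithBot ℕ) := by
          by_cases hA0 : P.comp (X + C y) - P = 0
          · rw [hA0, degree_zero]
            exact WithBot.bot_lt_coe _
          · refine lt_of_lt_of_le (degree_sub_lt hcompdeg (hPmonic.comp_X_add_C y).ne_zero ?_)
              (le_of_eq (hcompdeg.trans hPd))
            rw [hPmonic.leadingCoeff, (hPmonic.comp_X_add_C y).leadingCoeff]
        have hC : (C (P.eval y)).degree < ((q ^ m : ℕ) : WithBot ℕ) := by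
          refine lt_of_le_of_lt degree_C_le ?_
          rw [show ((0 : WithBot ℕ)) = ((0 : ℕ) : WithBot ℕ) from rfl]
          exact_mod_cast pow_pos (lt_of_lt_of_le Nat.zero_lt_one hq1) m
        have hDd : D.degree < ((q ^ m : ℕ) : WithBot ℕ) := by
          rw [hDdef]
          exact lt_of_le_of_lt (degree_sub_le _ _) (max_lt hA hC)
        rw [hScard]
        exact (natDegree_lt_iff_degree_lt hD0).mpr hDd
  -- scalar compatibility of evaluation
  have hsmul : ∀ (c : K) (x : F),
      P.eval (algebraMap K F c * x) = algebraMap K F c * P.eval x := by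
    intro c x
    by_cases hc : c = 0
    · simp [hc, (hProot 0).mpr h0W]
    · have hu0 : algebraMap K F c ≠ 0 := fun h =>
        hc ((algebraMap K F).injective (by rw [h, map_zero]))
      set u : F := algebraMap K F c with hu
      have hclose : ∀ d : K, ∀ w ∈ S, algebraMap K F d * w ∈ S := by
        intro d w hw
        rw [hmemS] at hw ⊢
        simpa [Algebra.smul_def] using W.smul_mem d hw
      have hupow : u ^ q ^ m = u := by
        have key : ∀ n : ℕ, u ^ Fintype.card K ^ n = u := by
          intro n
          induction n with
          | zero => simp
          | succ n ih => rw [pow_succ, pow_mul, ih, hu, ← map_pow, FiniteField.pow_card]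
        simpa [hq] using key m
      calc P.eval (u * x) = ∏ w ∈ S, (u * x - w) := hPeval _
        _ = ∏ w ∈ S, (u * x - u * w) := by
            refine Finset.prod_nbij' (fun w => u⁻¹ * w) (fun w => u * w) ?_ ?_ ?_ ?_ ?_
            · intro w hw
              have h := hclose c⁻¹ w hw
              rwa [map_inv₀, ← hu] at h
            · intro w hw
              rw [hu]
              exact hclose c w hw
            · intro w _
              exact mul_inv_cancel_left₀ hu0 w
            · intro w _
              exact inv_mul_cancel_left₀ hu0 w
            · intro w _
              show u * x - w = u * x - u * (u⁻¹ * w)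
              rw [mul_inv_cancel_left₀ hu0]
        _ = ∏ w ∈ S, (u * (x - w)) := by
            refine Finset.prod_congr rfl fun w _ => ?_
            ring
        _ = u ^ S.card * ∏ w ∈ S, (x - w) := by
            rw [Finset.prod_mul_distrib, Finset.prod_const]
        _ = u * P.eval x := by rw [hScard, hupow, hPeval]
  -- the linear map given by evaluation of P
  let L : F →ₗ[K] F :=
    { toFun := fun x => P.eval x
      map_add' := hadd
      map_smul' := by
        intro c x
        simp only [RingHom.id_apply, Algebra.smul_def]
        exact hsmul c x }
  have hLapp : ∀ x : F, L x = P.eval x := fun x => rfl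
  have hker : LinearMap.ker L = W := by
    ext x
    rw [LinearMap.mem_ker, hLapp, hProot]
  have hrange : Module.finrank K (LinearMap.range L) = ℓ - m := by
    have h := LinearMap.finrank_range_add_finrank_ker L
    rw [hker, hWrank, hℓ] at h
    omega
  -- the nonzero constant c0 = P'(0)
  set Pr : F[X] := ∏ w ∈ S.erase 0, (X - C w) with hPrdef
  have hPsplit : P = X * Pr := by
    rw [hPdef, hPrdef, ← Finset.mul_prod_erase S (fun w => X - C w) h0S, C_0, sub_zero]
  set c0 : F := (derivative P).eval 0 with hc0def
  have hc0eq : c0 = Pr.eval 0 := by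
    rw [hc0def, hPsplit, derivative_mul, derivative_X]
    simp
  have hc0ne : c0 ≠ 0 := by
    rw [hc0eq, hPrdef, eval_prod]
    refine Finset.prod_ne_zero_iff.mpr fun w hw => ?_
    have hw0 : w ≠ 0 := Finset.ne_of_mem_erase hw
    simp only [eval_sub, eval_X, eval_C, zero_sub, neg_ne_zero]
    exact hw0
  -- the polynomials g i
  have hbne : ∀ i : Fin ℓ, (b i : F) ≠ 0 := fun i => b.ne_zero i
  let g : Fin ℓ → F[X] := fun i => (P.comp (C (b i) * (X - C αs))) /ₘ (X - C αs)
  have hroot : ∀ i, (P.comp (C (b i) * (X - C αs))).IsRoot αs := by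
    intro i
    have h0 : P.eval 0 = 0 := (hProot 0).mpr h0W
    simp [IsRoot, eval_comp, h0]
  have hmulg : ∀ i, (X - C αs) * g i = P.comp (C (b i) * (X - C αs)) := fun i =>
    mul_divByMonic_eq_iff_isRoot.mpr (hroot i)
  have hPideg : ∀ i, (P.comp (C (b i) * (X - C αs))).natDegree = q ^ m := by
    intro i
    rw [natDegree_comp, natDegree_C_mul (hbne i), natDegree_X_sub_C, mul_one, hPdeg]
  have hgdeg : ∀ i, (g i).natDegree = q ^ m - 1 := by
    intro i
    show ((P.comp (C (b i) * (X - C αs))) /ₘ (X - C αs)).natDegree = q ^ m - 1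
    rw [natDegree_divByMonic _ (monic_X_sub_C αs), hPideg i, natDegree_X_sub_C]
  have hgev : ∀ i α, (α - αs) * (g i).eval α = P.eval (b i * (α - αs)) := by
    intro i α
    have h := congrArg (Polynomial.eval α) (hmulg i)
    simpa [eval_comp] using h
  -- value at αs
  have hgαs : ∀ i, (g i).eval αs = b i * c0 := by
    intro i
    have h1 : Polynomial.eval αs (derivative ((X - C αs) * g i)) = (g i).eval αs := by
      rw [derivative_mul]
      simp
    have h2 : Polynomial.eval αs (derivative (P.comp (C (b i) * (X - C αs)))) = b i * c0 := by
      rw [derivative_comp, hc0def]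
      simp
    rw [← h1, hmulg i, h2]
  -- the rescaled basis
  let e : F ≃ₗ[K] F := LinearEquiv.ofLinear (LinearMap.mulLeft K c0) (LinearMap.mulLeft K c0⁻¹)
    (by
      ext x
      simp only [LinearMap.coe_comp, Function.comp_apply, LinearMap.mulLeft_apply,
        LinearMap.id_coe, id_eq, ← mul_assoc, mul_inv_cancel₀ hc0ne, one_mul])
    (by
      ext x
      simp only [LinearMap.coe_comp, Function.comp_apply, LinearMap.mulLeft_apply,
        LinearMap.id_coe, id_eq, ← mul_assoc, inv_mul_cancel₀ hc0ne, one_mul])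
  let b' : Module.Basis (Fin ℓ) K F := b.map e
  have hb'i : ∀ i, b' i = c0 * b i := by
    intro i
    show e (b i) = c0 * b i
    simp [e, LinearEquiv.ofLinear_apply, LinearMap.mulLeft_apply]
  have hveq : (fun i => (g i).eval αs) = ⇑b' := by
    funext i
    rw [hgαs i, hb'i i, mul_comm]
  refine ⟨g, ?_, ?_, ?_, ?_⟩
  · intro i
    exact (hgdeg i).le
  · rw [hveq]
    exact b'.linearIndependent
  · rw [hveq]
    exact b'.span_eq
  · intro α hα
    have hu : α - αs ≠ 0 := sub_ne_zero.mpr hα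
    let f' : F →ₗ[K] F := LinearMap.mulLeft K (α - αs)⁻¹
    have hle : Submodule.span K (Set.range fun i => (g i).eval α) ≤
        Submodule.map f' (LinearMap.range L) := by
      rw [Submodule.span_le]
      rintro _ ⟨i, rfl⟩
      have heq : (g i).eval α = f' (L (b i * (α - αs))) := by
        show (g i).eval α = (α - αs)⁻¹ * P.eval (b i * (α - αs))
        rw [← hgev i α, inv_mul_cancel_left₀ hu]
      show (g i).eval α ∈ (Submodule.map f' (LinearMap.range L) : Set F)
      rw [heq]
      exact Submodule.mem_map_of_mem (LinearMap.mem_range_self L _)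
    calc Module.finrank K (Submodule.span K (Set.range fun i => (g i).eval α))
        ≤ Module.finrank K (Submodule.map f' (LinearMap.range L)) :=
          Submodule.finrank_mono hle
      _ ≤ Module.finrank K (LinearMap.range L) := Submodule.finrank_map_le f' _
      _ = ℓ - m := hrange
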